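/- Quantitative error of frequency truncation on the linear flow (linear core of Theorem 3.1): let ω : N → ℝ satisfy |ω_a| ≤ C·|a|^m for all a ∈ N, with constants C > 0 and m > 0, where |a| = max(1,‖a‖). Let K > 0, h > 0 with Ch/K ≤ 1, set Λ = K/h, and let ω^Λ_a = ω_a if ω_a ≤ Λ and ω^Λ_a = 0 otherwise. Then for every t ∈ ℝ, every s ≥ 0, every σ ≥ 0, and every sequence (z_a)_{a∈N} of complex numbers, Σ_{a∈N} |a|^{2s}·|e^{−itω_a} − e^{−itω^Λ_a}|²·|z_a|² ≤ 4·(Ch/K)^{2σ/m} · Σ_{a∈N} |a|^{2(s+σ)}·|z_a|² (an inequality in [0,∞]). -/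

import Mathlib

open scoped BigOperators

/-- `|a| = max(1, ‖a‖)` with `‖a‖` the Euclidean norm of `a ∈ ℤ^d`. -/
noncomputable def absN {d : ℕ} (a : Fin d → ℤ) : ℝ :=
  max 1 (Real.sqrt (∑ i, ((a i : ℝ)) ^ 2))

/-- Quantitative error of frequency truncation on the linear flow, linear
core of Theorem 3.1: if `|ω_a| ≤ C|a|^m`, `Ch/K ≤ 1`, `Λ = K/h` and `ω^Λ` is the
truncation of `ω` at `Λ`, then for all `t ∈ ℝ`, `s, σ ≥ 0` and all complex sequences `z`,
`Σ_a |a|^{2s} |e^{−itω_a} − e^{−itω^Λ_a}|² |z_a|²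
  ≤ 4 (Ch/K)^{2σ/m} Σ_a |a|^{2(s+σ)} |z_a|²` (an inequality in `[0,∞]`). -/
theorem truncation_error_linear_flow
    {d : ℕ} (hd : 1 ≤ d) (ω : (Fin d → ℤ) → ℝ) (C m : ℝ) (hC : 0 < C) (hm : 0 < m)
    (hgrowth : ∀ a : Fin d → ℤ, |ω a| ≤ C * absN a ^ m)
    (K h : ℝ) (hK : 0 < K) (hh : 0 < h) (hCh : C * h / K ≤ 1)
    (Λ : ℝ) (hΛ : Λ = K / h)
    (ωΛ : (Fin d → ℤ) → ℝ) (hωΛ : ∀ a, ωΛ a = if ω a ≤ Λ then ω a else 0)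
    (t s σ : ℝ) (hs : 0 ≤ s) (hσ : 0 ≤ σ) (z : (Fin d → ℤ) → ℂ) :
    ∑' a : Fin d → ℤ,
        ENNReal.ofReal (absN a ^ (2 * s) *
          ‖Complex.exp (-((t : ℂ) * (ω a : ℂ)) * Complex.I) -
            Complex.exp (-((t : ℂ) * (ωΛ a : ℂ)) * Complex.I)‖ ^ 2 *
          ‖z a‖ ^ 2)
      ≤ ENNReal.ofReal (4 * (C * h / K) ^ (2 * σ / m)) *
        ∑' a : Fin d → ℤ,
          ENNReal.ofReal (absN a ^ (2 * (s + σ)) * ‖z a‖ ^ 2) := by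

  set c : ℝ := (C * h / K) ^ (2 * σ / m) with hc
  have hc0 : 0 ≤ c := Real.rpow_nonneg (by positivity) _
  have key : ∀ a : Fin d → ℤ,
      absN a ^ (2 * s) *
          ‖Complex.exp (-((t : ℂ) * (ω a : ℂ)) * Complex.I) -
            Complex.exp (-((t : ℂ) * (ωΛ a : ℂ)) * Complex.I)‖ ^ 2 *
          ‖z a‖ ^ 2
        ≤ (4 * c) * (absN a ^ (2 * (s + σ)) * ‖z a‖ ^ 2) := by
    intro a
    have hA1 : (1:ℝ) ≤ absN a := le_max_left _ _
    have hA0 : (0:ℝ) < absN a := lt_of_lt_of_le one_pos hA1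
    have hsplit : absN a ^ (2 * (s + σ)) = absN a ^ (2 * s) * absN a ^ (2 * σ) := by
      rw [mul_add, Real.rpow_add hA0]
    have hAs : (0:ℝ) ≤ absN a ^ (2 * s) := Real.rpow_nonneg hA0.le _
    have hZ : (0:ℝ) ≤ ‖z a‖ ^ 2 := by positivity
    have hD : ‖Complex.exp (-((t : ℂ) * (ω a : ℂ)) * Complex.I) -
            Complex.exp (-((t : ℂ) * (ωΛ a : ℂ)) * Complex.I)‖ ^ 2
          ≤ 4 * c * absN a ^ (2 * σ) := by
      have hcA : (0:ℝ) ≤ c * absN a ^ (2 * σ) :=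
        mul_nonneg hc0 (Real.rpow_nonneg hA0.le _)
      by_cases hle : ω a ≤ Λ
      · rw [hωΛ a, if_pos hle, sub_self]
        simpa using by nlinarith
      · have habs : ‖Complex.exp (-((t : ℂ) * (ω a : ℂ)) * Complex.I) -
            Complex.exp (-((t : ℂ) * (ωΛ a : ℂ)) * Complex.I)‖ ≤ 2 := by
          calc ‖Complex.exp (-((t : ℂ) * (ω a : ℂ)) * Complex.I) -
                Complex.exp (-((t : ℂ) * (ωΛ a : ℂ)) * Complex.I)‖
              ≤ ‖Complex.exp (-((t : ℂ) * (ω a : ℂ)) * Complex.I)‖ +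
                ‖Complex.exp (-((t : ℂ) * (ωΛ a : ℂ)) * Complex.I)‖ :=
                norm_sub_le _ _
            _ ≤ 2 := by
                simp [Complex.norm_exp]
                norm_num
        have hgt : K / h < ω a := by rw [← hΛ]; exact lt_of_not_ge hle
        have hCA : K / h < C * absN a ^ m :=
          lt_of_lt_of_le hgt ((le_abs_self _).trans (hgrowth a))
        have hbase : 1 ≤ (C * h / K) * absN a ^ m := by
          rw [div_mul_eq_mul_div, le_div_iff₀ hK, one_mul]
          have := (div_lt_iff₀ hh).mp hCA
          nlinarith
        have hone : 1 ≤ c * absN a ^ (2 * σ) := by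
          have hAm : (0:ℝ) ≤ absN a ^ m := Real.rpow_nonneg hA0.le _
          have h1 : ((C * h / K) * absN a ^ m) ^ (2 * σ / m)
              = c * (absN a ^ m) ^ (2 * σ / m) :=
            Real.mul_rpow (by positivity) hAm
          have h2 : (absN a ^ m) ^ (2 * σ / m) = absN a ^ (2 * σ) := by
            rw [← Real.rpow_mul hA0.le]
            congr 1
            field_simp
          rw [← h2, ← h1]
          exact Real.one_le_rpow hbase (by positivity)
        have hD2 : ‖Complex.exp (-((t : ℂ) * (ω a : ℂ)) * Complex.I) -
            Complex.exp (-((t : ℂ) * (ωΛ a : ℂ)) * Complex.I)‖ ^ 2 ≤ 4 := by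
          have h0 : (0:ℝ) ≤ ‖Complex.exp (-((t : ℂ) * (ω a : ℂ)) * Complex.I) -
            Complex.exp (-((t : ℂ) * (ωΛ a : ℂ)) * Complex.I)‖ := norm_nonneg _
          nlinarith
        nlinarith
    calc absN a ^ (2 * s) *
          ‖Complex.exp (-((t : ℂ) * (ω a : ℂ)) * Complex.I) -
            Complex.exp (-((t : ℂ) * (ωΛ a : ℂ)) * Complex.I)‖ ^ 2 *
          ‖z a‖ ^ 2
        ≤ absN a ^ (2 * s) * (4 * c * absN a ^ (2 * σ)) * ‖z a‖ ^ 2 := by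
          apply mul_le_mul_of_nonneg_right _ hZ
          exact mul_le_mul_of_nonneg_left hD hAs
      _ = (4 * c) * (absN a ^ (2 * (s + σ)) * ‖z a‖ ^ 2) := by
          rw [hsplit]; ring
  calc ∑' a : Fin d → ℤ,
        ENNReal.ofReal (absN a ^ (2 * s) *
          ‖Complex.exp (-((t : ℂ) * (ω a : ℂ)) * Complex.I) -
            Complex.exp (-((t : ℂ) * (ωΛ a : ℂ)) * Complex.I)‖ ^ 2 *
          ‖z a‖ ^ 2)
      ≤ ∑' a : Fin d → ℤ,
        ENNReal.ofReal ((4 * c) * (absN a ^ (2 * (s + σ)) * ‖z a‖ ^ 2)) :=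
        ENNReal.tsum_le_tsum fun a => ENNReal.ofReal_le_ofReal (key a)
    _ = ∑' a : Fin d → ℤ,
        ENNReal.ofReal (4 * c) * ENNReal.ofReal (absN a ^ (2 * (s + σ)) * ‖z a‖ ^ 2) := by
        simp_rw [ENNReal.ofReal_mul (by positivity : (0:ℝ) ≤ 4 * c)]
    _ = ENNReal.ofReal (4 * c) *
        ∑' a : Fin d → ℤ,
          ENNReal.ofReal (absN a ^ (2 * (s + σ)) * ‖z a‖ ^ 2) :=
        ENNReal.tsum_mul_left
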